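/- Let A > 0, J > 0, N be a positive integer, and let X be a finite set of nonnegative reals. Let g0, g1 : X → ℝ be nonnegative weight functions with positive total mass satisfying the monotone likelihood ratio condition g1(x) * g0(x') ≥ g0(x) * g1(x') for all x, x' ∈ X with x' < x. Then the function L : ℝ → ℝ defined by L(σ) = (∑_{x∈X} g1(x) · exp(−N(xA+J)) · (xA+J)^σ) / (∑_{x∈X} g0(x) · exp(−N(xA+J)) · (xA+J)^σ) is monotonically nondecreasing in σ ≥ 0. -/

import Mathlib

open Real Finset

lemma sum_sum_nonneg_of_symm (X : Finset ℝ) (F : ℝ → ℝ → ℝ)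
    (h : ∀ x ∈ X, ∀ y ∈ X, 0 ≤ F x y + F y x) :
    0 ≤ ∑ x ∈ X, ∑ y ∈ X, F x y := by
  have h2 : 0 ≤ ∑ x ∈ X, ∑ y ∈ X, (F x y + F y x) :=
    Finset.sum_nonneg (fun x hx => Finset.sum_nonneg (fun y hy => h x hx y hy))
  have h3 : ∑ x ∈ X, ∑ y ∈ X, (F x y + F y x)
      = (∑ x ∈ X, ∑ y ∈ X, F x y) + (∑ x ∈ X, ∑ y ∈ X, F y x) := by
    simp [Finset.sum_add_distrib]
  have h4 : (∑ x ∈ X, ∑ y ∈ X, F y x) = ∑ x ∈ X, ∑ y ∈ X, F x y :=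
    Finset.sum_comm
  linarith [h2, h3.symm ▸ h2]

/-- Theorem 1 (likelihood-ratio form): under the MLR condition on the sensing
weights `g0, g1`, the likelihood ratio `L` is nondecreasing in `σ ≥ 0`. -/
theorem llr_monotone
    (A J : ℝ) (hA : 0 < A) (hJ : 0 < J) (N : ℕ) (hN : 0 < N)
    (X : Finset ℝ) (hXnn : ∀ x ∈ X, 0 ≤ x)
    (g0 g1 : ℝ → ℝ)
    (hg0 : ∀ x ∈ X, 0 ≤ g0 x) (hg1 : ∀ x ∈ X, 0 ≤ g1 x)
    (hg0pos : 0 < ∑ x ∈ X, g0 x) (hg1pos : 0 < ∑ x ∈ X, g1 x)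
    (hMLR : ∀ x ∈ X, ∀ x' ∈ X, x' < x → g0 x * g1 x' ≤ g1 x * g0 x')
    (L : ℝ → ℝ)
    (hL : ∀ σ : ℝ, L σ =
      (∑ x ∈ X, g1 x * Real.exp (-(N : ℝ) * (x * A + J)) * (x * A + J) ^ σ) /
      (∑ x ∈ X, g0 x * Real.exp (-(N : ℝ) * (x * A + J)) * (x * A + J) ^ σ)) :
    ∀ σ₁ σ₂ : ℝ, 0 ≤ σ₁ → σ₁ ≤ σ₂ → L σ₁ ≤ L σ₂ := by
  intro σ₁ σ₂ hσ₁ h12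
  have hφpos : ∀ x ∈ X, 0 < x * A + J := by
    intro x hx
    nlinarith [mul_nonneg (hXnn x hx) hA.le]
  set w : ℝ → ℝ → ℝ := fun σ x => Real.exp (-(N : ℝ) * (x * A + J)) * (x * A + J) ^ σ
    with hw
  have hwpos : ∀ σ, ∀ x ∈ X, 0 < w σ x := by
    intro σ x hx
    exact mul_pos (Real.exp_pos _) (Real.rpow_pos_of_pos (hφpos x hx) _)
  -- denominators positive
  obtain ⟨x₀, hx₀, hg0x₀⟩ : ∃ x ∈ X, 0 < g0 x := by
    by_contra h
    push_neg at h
    have : ∑ x ∈ X, g0 x = 0 :=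
      Finset.sum_eq_zero (fun x hx => le_antisymm (h x hx) (hg0 x hx))
    linarith
  have hden : ∀ σ : ℝ,
      0 < ∑ x ∈ X, g0 x * Real.exp (-(N : ℝ) * (x * A + J)) * (x * A + J) ^ σ := by
    intro σ
    apply Finset.sum_pos'
    · intro x hx
      rw [mul_assoc]
      exact mul_nonneg (hg0 x hx) (hwpos σ x hx).le
    · refine ⟨x₀, hx₀, ?_⟩
      rw [mul_assoc]
      exact mul_pos hg0x₀ (hwpos σ x₀ hx₀)
  rw [hL σ₁, hL σ₂, div_le_div_iff₀ (hden σ₁) (hden σ₂)]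
  -- key pairwise inequality
  have hwkey : ∀ x ∈ X, ∀ y ∈ X, y ≤ x → w σ₁ x * w σ₂ y ≤ w σ₂ x * w σ₁ y := by
    intro x hx y hy hyx
    have hφx := hφpos x hx
    have hφy := hφpos y hy
    have hφle : y * A + J ≤ x * A + J := by nlinarith
    set δ := σ₂ - σ₁ with hδ
    have hδnn : 0 ≤ δ := by linarith
    have hr : (y * A + J) ^ δ ≤ (x * A + J) ^ δ :=
      Real.rpow_le_rpow hφy.le hφle hδnn
    have hx2 : (x * A + J) ^ σ₂ = (x * A + J) ^ σ₁ * (x * A + J) ^ δ := by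
      rw [← Real.rpow_add hφx, hδ]; ring_nf
    have hy2 : (y * A + J) ^ σ₂ = (y * A + J) ^ σ₁ * (y * A + J) ^ δ := by
      rw [← Real.rpow_add hφy, hδ]; ring_nf
    simp only [hw]
    rw [hx2, hy2]
    have e1 : (0:ℝ) < Real.exp (-(N : ℝ) * (x * A + J)) := Real.exp_pos _
    have e2 : (0:ℝ) < Real.exp (-(N : ℝ) * (y * A + J)) := Real.exp_pos _
    have p1 : (0:ℝ) < (x * A + J) ^ σ₁ := Real.rpow_pos_of_pos hφx _
    have p2 : (0:ℝ) < (y * A + J) ^ σ₁ := Real.rpow_pos_of_pos hφy _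
    have p3 : (0:ℝ) < (y * A + J) ^ δ := Real.rpow_pos_of_pos hφy _
    nlinarith [mul_pos (mul_pos e1 e2) (mul_pos p1 p2)]
  -- the symmetrized pair inequality
  set F : ℝ → ℝ → ℝ := fun x y =>
    g1 x * w σ₂ x * (g0 y * w σ₁ y) - g1 x * w σ₁ x * (g0 y * w σ₂ y) with hF
  have hpair : ∀ x ∈ X, ∀ y ∈ X, 0 ≤ F x y + F y x := by
    have main : ∀ x ∈ X, ∀ y ∈ X, y < x → 0 ≤ F x y + F y x := by
      intro x hx y hy hyx
      have hmlr := hMLR x hx y hy hyx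
      have hwk := hwkey x hx y hy hyx.le
      have h1 : F x y + F y x
          = (g1 x * g0 y - g0 x * g1 y) * (w σ₂ x * w σ₁ y - w σ₁ x * w σ₂ y) := by
        simp only [hF]; ring
      rw [h1]
      exact mul_nonneg (by linarith) (by linarith)
    intro x hx y hy
    rcases lt_trichotomy x y with h | h | h
    · have := main y hy x hx h; linarith
    · subst h
      have hz : F x x + F x x = 0 := by simp only [hF]; ring
      linarith
    · exact main x hx y hy h
  have hsum : 0 ≤ ∑ x ∈ X, ∑ y ∈ X, F x y := sum_sum_nonneg_of_symm X F hpair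
  have hexp : ∑ x ∈ X, ∑ y ∈ X, F x y
      = (∑ x ∈ X, g1 x * w σ₂ x) * (∑ y ∈ X, g0 y * w σ₁ y)
        - (∑ x ∈ X, g1 x * w σ₁ x) * (∑ y ∈ X, g0 y * w σ₂ y) := by
    rw [Finset.sum_mul_sum, Finset.sum_mul_sum, ← Finset.sum_sub_distrib]
    exact Finset.sum_congr rfl fun x _ => by rw [← Finset.sum_sub_distrib]
  have key : (∑ x ∈ X, g1 x * w σ₁ x) * (∑ y ∈ X, g0 y * w σ₂ y)
      ≤ (∑ x ∈ X, g1 x * w σ₂ x) * (∑ y ∈ X, g0 y * w σ₁ y) := by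
    rw [hexp] at hsum; linarith
  have hrw : ∀ σ : ℝ, ∀ g : ℝ → ℝ,
      (∑ x ∈ X, g x * Real.exp (-(N : ℝ) * (x * A + J)) * (x * A + J) ^ σ)
        = ∑ x ∈ X, g x * w σ x := by
    intro σ g; exact Finset.sum_congr rfl fun x _ => by simp [hw, mul_assoc]
  rw [hrw σ₁ g1, hrw σ₂ g0, hrw σ₂ g1, hrw σ₁ g0]
  exact key
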